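/- For the sub-Gaussian family f(x) = c·exp(-x^{2k}) with k ≥ 2 an integer, the ratio Γ(1/(2k))² Γ(7/(2k)) / (9 Γ(3/(2k))³) is strictly less than 1. -/

import Mathlib

open Real

private lemma gamma_le_one' {x : ℝ} (h1 : 1 ≤ x) (h2 : x ≤ 2) : Real.Gamma x ≤ 1 := by
  have hc := Real.convexOn_Gamma
  have h := hc.2 (by norm_num : (1:ℝ) ∈ Set.Ioi 0) (by norm_num : (2:ℝ) ∈ Set.Ioi 0)
    (show (0:ℝ) ≤ 2 - x by linarith) (show (0:ℝ) ≤ x - 1 by linarith) (by ring)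
  simp only [smul_eq_mul, Real.Gamma_one, Real.Gamma_two] at h
  have : (2 - x) * 1 + (x - 1) * 2 = x := by ring
  rw [this] at h
  linarith

private lemma one_le_gamma' {x : ℝ} (hx : 2 ≤ x) : 1 ≤ Real.Gamma x := by
  rcases eq_or_lt_of_le hx with h | h
  · rw [← h, Real.Gamma_two]
  · have hc := Real.convexOn_Gamma
    have hx1 : (0:ℝ) < x - 1 := by linarith
    have h2 := hc.2 (by norm_num : (1:ℝ) ∈ Set.Ioi 0)
      (show x ∈ Set.Ioi 0 by simp only [Set.mem_Ioi]; linarith)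
      (show (0:ℝ) ≤ (x - 2)/(x - 1) by
        apply div_nonneg <;> linarith)
      (show (0:ℝ) ≤ 1/(x - 1) by positivity)
      (by field_simp; ring)
    simp only [smul_eq_mul, Real.Gamma_one] at h2
    rw [show (x - 2) / (x - 1) * 1 + 1 / (x - 1) * x = 2 by field_simp; ring,
      Real.Gamma_two] at h2
    have h4 : (x-2)/(x-1) + 1/(x-1) = 1 := by field_simp; ring
    have h5 : (0:ℝ) < 1/(x-1) := by positivity
    nlinarith

private lemma gamma_three' : Real.Gamma 3 = 2 := by
  rw [show (3:ℝ) = 2 + 1 by norm_num, Real.Gamma_add_one (by norm_num), Real.Gamma_two]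
  norm_num

-- log Γ(27/8) ≥ (11/8) log 2 by log-convexity with points 2 and 27/8 combining to 3
private lemma log_gamma_278 : (11/8 : ℝ) * Real.log 2 ≤ Real.log (Real.Gamma (27/8)) := by
  have hc := Real.convexOn_log_Gamma
  have h := hc.2 (by norm_num : (2:ℝ) ∈ Set.Ioi 0) (by norm_num : (27/8:ℝ) ∈ Set.Ioi 0)
    (by norm_num : (0:ℝ) ≤ 3/11) (by norm_num : (0:ℝ) ≤ 8/11) (by norm_num)
  simp only [smul_eq_mul, Function.comp_apply] at h
  rw [show (3:ℝ)/11 * 2 + 8/11 * (27/8) = 3 by norm_num, gamma_three', Real.Gamma_two,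
    Real.log_one] at h
  linarith

private lemma gamma_278 : (2.58 : ℝ) ≤ Real.Gamma (27/8) := by
  have hpos : (0:ℝ) < Real.Gamma (27/8) := Real.Gamma_pos_of_pos (by norm_num)
  have h1 : Real.exp ((11/8 : ℝ) * Real.log 2) ≤ Real.Gamma (27/8) := by
    rw [← Real.exp_log hpos]
    exact Real.exp_le_exp.mpr log_gamma_278
  refine le_trans ?_ h1
  -- exp((11/8) log 2) ≥ 2.58  ⟺  2^11 ≥ 2.58^8
  have h2 : ((2.58:ℝ)) ^ (8:ℕ) ≤ (Real.exp ((11/8 : ℝ) * Real.log 2)) ^ (8:ℕ) := by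
    rw [← Real.exp_nat_mul]
    rw [show (8:ℕ) * ((11/8 : ℝ) * Real.log 2) = (11:ℕ) * Real.log 2 by push_cast; ring]
    rw [Real.exp_nat_mul, Real.exp_log (by norm_num : (0:ℝ) < 2)]
    norm_num
  exact le_of_pow_le_pow_left₀ (by norm_num) (Real.exp_pos _).le h2

private lemma sqrt_pi_lt : Real.sqrt π < 1.7725 := by
  rw [show (1.7725:ℝ) = Real.sqrt (1.7725^2) from (Real.sqrt_sq (by norm_num)).symm]
  apply Real.sqrt_lt_sqrt Real.pi_pos.le
  nlinarith [Real.pi_lt_d4]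

private lemma sqrt_pi_gt : (1.77:ℝ) < Real.sqrt π := by
  rw [show (1.77:ℝ) = Real.sqrt (1.77^2) from (Real.sqrt_sq (by norm_num)).symm]
  apply Real.sqrt_lt_sqrt (by norm_num)
  nlinarith [Real.pi_gt_d4]

private lemma reduce {t : ℝ} (ht : 0 < t)
    (key : 3 * Real.Gamma (t+1)^2 * Real.Gamma (7*t+1) < 7 * Real.Gamma (3*t+1)^3) :
    Real.Gamma t ^ 2 * Real.Gamma (7*t) / (9 * Real.Gamma (3*t)^3) < 1 := by
  have h3 : (0:ℝ) < Real.Gamma (3*t) := Real.Gamma_pos_of_pos (by positivity)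
  rw [div_lt_one (by positivity)]
  have g1 : Real.Gamma (t+1) = t * Real.Gamma t := Real.Gamma_add_one ht.ne'
  have g3 : Real.Gamma (3*t+1) = 3*t * Real.Gamma (3*t) :=
    Real.Gamma_add_one (by positivity)
  have g7 : Real.Gamma (7*t+1) = 7*t * Real.Gamma (7*t) :=
    Real.Gamma_add_one (by positivity)
  rw [g1, g3, g7] at key
  have key2 : 21*t^3 * (Real.Gamma t ^2 * Real.Gamma (7*t)) <
      21*t^3 * (9 * Real.Gamma (3*t)^3) := by
    calc 21*t^3 * (Real.Gamma t ^2 * Real.Gamma (7*t))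
        = 3 * (t * Real.Gamma t)^2 * (7*t * Real.Gamma (7*t)) := by ring
      _ < 7 * (3*t * Real.Gamma (3*t))^3 := key
      _ = 21*t^3 * (9 * Real.Gamma (3*t)^3) := by ring
  exact lt_of_mul_lt_mul_left key2 (by positivity)

private lemma key_small {t : ℝ} (ht : 0 < t) (ht' : t ≤ 1/10) :
    3 * Real.Gamma (t+1)^2 * Real.Gamma (7*t+1) < 7 * Real.Gamma (3*t+1)^3 := by
  have h1 : Real.Gamma (t+1) ≤ 1 := gamma_le_one' (by linarith) (by linarith)
  have h7 : Real.Gamma (7*t+1) ≤ 1 := gamma_le_one' (by linarith) (by linarith)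
  have hp1 : 0 < Real.Gamma (t+1) := Real.Gamma_pos_of_pos (by linarith)
  have hp7 : 0 < Real.Gamma (7*t+1) := Real.Gamma_pos_of_pos (by linarith)
  have hp3 : 0 < Real.Gamma (3*t+1) := Real.Gamma_pos_of_pos (by linarith)
  have h3 : (10:ℝ)/13 ≤ Real.Gamma (3*t+1) := by
    have e : Real.Gamma (3*t+2) = (3*t+1) * Real.Gamma (3*t+1) := by
      rw [show (3*t+2) = (3*t+1)+1 by ring]
      exact Real.Gamma_add_one (by positivity)
    have hg2 : 1 ≤ Real.Gamma (3*t+2) := one_le_gamma' (by linarith)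
    nlinarith
  calc 3 * Real.Gamma (t+1)^2 * Real.Gamma (7*t+1) ≤ 3 := by nlinarith
    _ < 7 * (10/13:ℝ)^3 := by norm_num
    _ ≤ 7 * Real.Gamma (3*t+1)^3 := by
      nlinarith [pow_le_pow_left₀ (by norm_num : (0:ℝ) ≤ 10/13) h3 3]

private lemma key_k3 :
    3 * Real.Gamma (7/6 : ℝ)^2 * Real.Gamma (13/6 : ℝ) < 7 * Real.Gamma (3/2 : ℝ)^3 := by
  have e13 : Real.Gamma (13/6 : ℝ) = (7/6) * Real.Gamma (7/6 : ℝ) := by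
    rw [show (13/6:ℝ) = 7/6 + 1 by norm_num]
    exact Real.Gamma_add_one (by norm_num)
  have e32 : Real.Gamma (3/2 : ℝ) = Real.sqrt π / 2 := by
    rw [show (3/2:ℝ) = 1/2 + 1 by norm_num, Real.Gamma_add_one (by norm_num),
      Real.Gamma_one_half_eq]
    ring
  have h76 : Real.Gamma (7/6 : ℝ) ≤ 1 := gamma_le_one' (by norm_num) (by norm_num)
  have hp76 : 0 < Real.Gamma (7/6 : ℝ) := Real.Gamma_pos_of_pos (by norm_num)
  have hs := sqrt_pi_gt
  have hcube : (1.77:ℝ)^3 < Real.sqrt π ^ 3 :=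
    pow_lt_pow_left₀ hs (by norm_num) (by norm_num)
  rw [e13, e32]
  nlinarith

private lemma key_k4 :
    3 * Real.Gamma (9/8 : ℝ)^2 * Real.Gamma (15/8 : ℝ) < 7 * Real.Gamma (11/8 : ℝ)^3 := by
  have h9 : Real.Gamma (9/8 : ℝ) ≤ 1 := gamma_le_one' (by norm_num) (by norm_num)
  have h15 : Real.Gamma (15/8 : ℝ) ≤ 1 := gamma_le_one' (by norm_num) (by norm_num)
  have hp9 : 0 < Real.Gamma (9/8 : ℝ) := Real.Gamma_pos_of_pos (by norm_num)
  have hp15 : 0 < Real.Gamma (15/8 : ℝ) := Real.Gamma_pos_of_pos (by norm_num)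
  have hp11 : 0 < Real.Gamma (11/8 : ℝ) := Real.Gamma_pos_of_pos (by norm_num)
  have e1 : Real.Gamma (27/8 : ℝ) = (19/8) * Real.Gamma (19/8 : ℝ) := by
    rw [show (27/8:ℝ) = 19/8 + 1 by norm_num]
    exact Real.Gamma_add_one (by norm_num)
  have e2 : Real.Gamma (19/8 : ℝ) = (11/8) * Real.Gamma (11/8 : ℝ) := by
    rw [show (19/8:ℝ) = 11/8 + 1 by norm_num]
    exact Real.Gamma_add_one (by norm_num)
  have h11 : (0.79:ℝ) ≤ Real.Gamma (11/8 : ℝ) := by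
    have := gamma_278
    rw [e1, e2] at this
    linarith
  have hcube : (0.79:ℝ)^3 ≤ Real.Gamma (11/8 : ℝ)^3 :=
    pow_le_pow_left₀ (by norm_num) h11 3
  nlinarith

private lemma key_k2 :
    3 * Real.Gamma (5/4 : ℝ)^2 * Real.Gamma (11/4 : ℝ) < 7 * Real.Gamma (7/4 : ℝ)^3 := by
  have hG : 0 < Real.Gamma (5/4 : ℝ) := Real.Gamma_pos_of_pos (by norm_num)
  have hc : 0 < Real.Gamma (3/4 : ℝ) := Real.Gamma_pos_of_pos (by norm_num)
  have e114 : Real.Gamma (11/4 : ℝ) = (7/4) * Real.Gamma (7/4 : ℝ) := by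
    rw [show (11/4:ℝ) = 7/4 + 1 by norm_num]
    exact Real.Gamma_add_one (by norm_num)
  have e74 : Real.Gamma (7/4 : ℝ) = (3/4) * Real.Gamma (3/4 : ℝ) := by
    rw [show (7/4:ℝ) = 3/4 + 1 by norm_num]
    exact Real.Gamma_add_one (by norm_num)
  have e54 : Real.Gamma (5/4 : ℝ) = (1/4) * Real.Gamma (1/4 : ℝ) := by
    rw [show (5/4:ℝ) = 1/4 + 1 by norm_num]
    exact Real.Gamma_add_one (by norm_num)
  -- reflection: Γ(1/4) Γ(3/4) = π √2
  have hrefl : Real.Gamma (1/4 : ℝ) * Real.Gamma (3/4 : ℝ) = π * Real.sqrt 2 := by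
    have h := Real.Gamma_mul_Gamma_one_sub (1/4 : ℝ)
    rw [show (1:ℝ) - 1/4 = 3/4 by norm_num, show π * (1/4 : ℝ) = π/4 by ring,
      Real.sin_pi_div_four] at h
    rw [h]
    have h2 : Real.sqrt 2 * Real.sqrt 2 = 2 := Real.mul_self_sqrt (by norm_num)
    have hs2 : (0:ℝ) < Real.sqrt 2 := Real.sqrt_pos.mpr (by norm_num)
    have hne : Real.sqrt 2 ≠ 0 := ne_of_gt hs2
    field_simp
    linear_combination (-1) * h2
  -- hence 4 Γ(5/4) Γ(3/4) = π √2
  have hrel : 4 * Real.Gamma (5/4 : ℝ) * Real.Gamma (3/4 : ℝ) = π * Real.sqrt 2 := by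
    rw [e54]
    linear_combination hrefl
  have hsq : 16 * Real.Gamma (5/4 : ℝ)^2 * Real.Gamma (3/4 : ℝ)^2 = 2 * π^2 := by
    have h2 : Real.sqrt 2 * Real.sqrt 2 = 2 := Real.mul_self_sqrt (by norm_num)
    linear_combination (4*Real.Gamma (5/4:ℝ)*Real.Gamma (3/4:ℝ) + π*Real.sqrt 2) * hrel
      + π^2 * h2
  -- chord bound: Γ(5/4) ≤ (Γ(1) + Γ(3/2))/2 = (2 + √π)/4
  have chord : Real.Gamma (5/4 : ℝ) ≤ (2 + Real.sqrt π)/4 := by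
    have hcv := Real.convexOn_Gamma
    have h := hcv.2 (by norm_num : (1:ℝ) ∈ Set.Ioi 0)
      (by norm_num : (3/2:ℝ) ∈ Set.Ioi 0)
      (by norm_num : (0:ℝ) ≤ 1/2) (by norm_num : (0:ℝ) ≤ 1/2) (by norm_num)
    have e32 : Real.Gamma (3/2 : ℝ) = Real.sqrt π / 2 := by
      rw [show (3/2:ℝ) = 1/2 + 1 by norm_num, Real.Gamma_add_one (by norm_num),
        Real.Gamma_one_half_eq]
      ring
    simp only [smul_eq_mul, Real.Gamma_one] at h
    rw [show (1:ℝ)/2 * 1 + 1/2 * (3/2) = 5/4 by norm_num, e32] at h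
    linarith
  -- numeric: Γ(5/4)^4 < 3 π^2 / 32
  have hG4 : Real.Gamma (5/4 : ℝ)^4 < 3 * π^2 / 32 := by
    have h1 : Real.Gamma (5/4 : ℝ) ≤ 3.7725/4 := by
      have := sqrt_pi_lt; linarith
    have h2 : Real.Gamma (5/4 : ℝ)^2 ≤ (3.7725/4:ℝ)^2 := by nlinarith
    have h4 : Real.Gamma (5/4 : ℝ)^4 ≤ (3.7725/4:ℝ)^4 := by nlinarith [sq_nonneg (Real.Gamma (5/4:ℝ))]
    have h5 : (3.7725/4:ℝ)^4 < 3 * π^2 / 32 := by nlinarith [Real.pi_gt_d4]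
    linarith
  -- conclude
  have step : (63/16) * Real.Gamma (5/4 : ℝ)^2 < (189/64) * Real.Gamma (3/4 : ℝ)^2 := by
    nlinarith [hG4, hsq, mul_pos hG hG, sq_nonneg (Real.Gamma (5/4:ℝ))]
  rw [e114, e74]
  nlinarith [mul_lt_mul_of_pos_right step hc]

/-- For the sub-Gaussian family `f(x) = c exp(-x^(2k))` with integer `k ≥ 2`, the ratio
`Γ(1/(2k))² Γ(7/(2k)) / (9 Γ(3/(2k))³)` is strictly less than 1. -/
theorem subgaussian_ratio_lt_one (k : ℕ) (hk : 2 ≤ k) :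
    Real.Gamma (1 / (2 * (k : ℝ))) ^ 2 * Real.Gamma (7 / (2 * (k : ℝ))) /
        (9 * Real.Gamma (3 / (2 * (k : ℝ))) ^ 3) < 1 := by
  have hk' : (2:ℝ) ≤ (k:ℝ) := by exact_mod_cast hk
  have h2k : (0:ℝ) < 2 * (k:ℝ) := by linarith
  rw [show (7:ℝ) / (2*(k:ℝ)) = 7 * (1/(2*(k:ℝ))) by ring,
    show (3:ℝ) / (2*(k:ℝ)) = 3 * (1/(2*(k:ℝ))) by ring]
  refine reduce (by positivity) ?_
  rcases (show k = 2 ∨ k = 3 ∨ k = 4 ∨ 5 ≤ k by omega) with rfl | rfl | rfl | h5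
  · rw [show (1:ℝ)/(2*((2:ℕ):ℝ)) = 1/4 by norm_num,
      show (1/4:ℝ) + 1 = 5/4 by norm_num, show 7*(1/4:ℝ) + 1 = 11/4 by norm_num,
      show 3*(1/4:ℝ) + 1 = 7/4 by norm_num]
    exact key_k2
  · rw [show (1:ℝ)/(2*((3:ℕ):ℝ)) = 1/6 by norm_num,
      show (1/6:ℝ) + 1 = 7/6 by norm_num, show 7*(1/6:ℝ) + 1 = 13/6 by norm_num,
      show 3*(1/6:ℝ) + 1 = 3/2 by norm_num]
    exact key_k3
  · rw [show (1:ℝ)/(2*((4:ℕ):ℝ)) = 1/8 by norm_num,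
      show (1/8:ℝ) + 1 = 9/8 by norm_num, show 7*(1/8:ℝ) + 1 = 15/8 by norm_num,
      show 3*(1/8:ℝ) + 1 = 11/8 by norm_num]
    exact key_k4
  · have h5' : (5:ℝ) ≤ (k:ℝ) := by exact_mod_cast h5
    refine key_small (by positivity) ?_
    rw [div_le_div_iff₀ (by linarith) (by norm_num)]
    linarith
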